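/- Let m ∈ ℕ and λ_j, h_j, w_j ∈ ℂ for j = 1,…,m, such that the 2m points λ_1,…,λ_m, conj(λ_1),…,conj(λ_m) are pairwise distinct. Define the real block-diagonal matrix Ã ∈ ℝ^{2m×2m} with j-th 2×2 diagonal block [[Re λ_j, Im λ_j],[−Im λ_j, Re λ_j]], and real vectors c̃ = (Re h_1, Im h_1, …, Re h_m, Im h_m)^T, b̃ = (Re w_1, −Im w_1, …, Re w_m, −Im w_m)^T, z̃ = (2, 0, 2, 0, …, 2, 0)^T ∈ ℝ^{2m}. Set E = I_{2m}, A = Ã − b̃ z̃^T, b = √2·b̃, c = √2·c̃. Then for every s ∈ ℂ with s ∉ {λ_j, conj(λ_j)} and d(s) := 1 + Σ_{j=1}^m (w_j/(s−λ_j) + conj(w_j)/(s−conj(λ_j))) ≠ 0, the matrix sE − A is invertible and c^T (sE − A)^{-1} b = (Σ_{j=1}^m (h_j w_j/(s−λ_j) + conj(h_j)·conj(w_j)/(s−conj(λ_j)))) / d(s). -/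

import Mathlib

open BigOperators

section AuxStmt15

open Matrix

lemma my_outer_mul {n : Type*} [Fintype n] (u v : n → ℂ) (W : Matrix n n ℂ) :
    Matrix.of (fun p q => u p * v q) * W
      = Matrix.of (fun p q => u p * (Matrix.vecMul v W) q) := by
  ext i j
  simp [Matrix.mul_apply, Matrix.vecMul, dotProduct, Finset.mul_sum, mul_assoc]

lemma my_mul_outer {n : Type*} [Fintype n] (W : Matrix n n ℂ) (u v : n → ℂ) :
    W * Matrix.of (fun p q => u p * v q)
      = Matrix.of (fun p q => (W.mulVec u) p * v q) := by
  ext i j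
  simp only [Matrix.mul_apply, Matrix.mulVec, dotProduct, Matrix.of_apply,
    Finset.sum_mul]
  congr 1; ext k; ring

lemma my_outer_mulVec {n : Type*} [Fintype n] (u v x : n → ℂ) :
    (Matrix.of (fun p q => u p * v q)).mulVec x = (dotProduct v x) • u := by
  ext i
  simp only [Matrix.mulVec, dotProduct, Matrix.of_apply, Pi.smul_apply, smul_eq_mul,
    Finset.sum_mul]
  congr 1; ext k; ring

lemma my_outer_mul_outer {n : Type*} [Fintype n] (u v x y : n → ℂ) :
    Matrix.of (fun p q => u p * v q) * Matrix.of (fun p q => x p * y q)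
      = (dotProduct v x) • Matrix.of (fun p q => u p * y q) := by
  ext i j
  simp only [Matrix.mul_apply, dotProduct, Matrix.of_apply, Matrix.smul_apply,
    smul_eq_mul, Finset.sum_mul]
  congr 1; ext k; ring

lemma my_blockdiag_mul {m : ℕ} (F G : Fin m → Matrix (Fin 2) (Fin 2) ℂ) :
    (Matrix.of fun (p q : Fin m × Fin 2) => if p.1 = q.1 then F p.1 p.2 q.2 else 0)
      * (Matrix.of fun (p q : Fin m × Fin 2) => if p.1 = q.1 then G p.1 p.2 q.2 else 0)
    = Matrix.of fun (p q : Fin m × Fin 2) =>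
        if p.1 = q.1 then (F p.1 * G p.1) p.2 q.2 else 0 := by
  ext ⟨i, a⟩ ⟨j, b⟩
  rw [Matrix.mul_apply, Fintype.sum_prod_type]
  simp only [Matrix.of_apply, ite_mul, mul_ite, zero_mul, mul_zero]
  rw [Finset.sum_comm]
  by_cases hij : i = j
  · subst hij
    simp [Matrix.mul_apply]
  · simp [hij, Finset.sum_ite_eq']

lemma my_blockdiag_one {m : ℕ} :
    (Matrix.of fun (p q : Fin m × Fin 2) =>
        if p.1 = q.1 then (1 : Matrix (Fin 2) (Fin 2) ℂ) p.2 q.2 else 0) = 1 := by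
  ext ⟨i, a⟩ ⟨j, b⟩
  by_cases hij : i = j
  · subst hij
    simp [Matrix.one_apply, Prod.ext_iff]
  · simp [Matrix.one_apply, Prod.ext_iff, hij]

lemma my_blockdiag_mulVec {m : ℕ} (F : Fin m → Matrix (Fin 2) (Fin 2) ℂ)
    (x : Fin m × Fin 2 → ℂ) :
    (Matrix.of fun (p q : Fin m × Fin 2) => if p.1 = q.1 then F p.1 p.2 q.2 else 0).mulVec x
      = fun p => ∑ c, F p.1 p.2 c * x (p.1, c) := by
  ext ⟨i, a⟩
  rw [Matrix.mulVec, dotProduct, Fintype.sum_prod_type]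
  simp only [Matrix.of_apply, ite_mul, zero_mul]
  rw [Finset.sum_comm]
  simp

open Complex in
lemma my_scal1 (s a bb rw iw : ℂ) (h1 : s - (a + bb*I) ≠ 0) (h2 : s - (a - bb*I) ≠ 0) :
    2 * ((s - a) / ((s-(a+bb*I))*(s-(a-bb*I))) * rw + bb / ((s-(a+bb*I))*(s-(a-bb*I))) * (-iw))
    = (rw + iw*I)/(s-(a+bb*I)) + (rw - iw*I)/(s-(a-bb*I)) := by
  field_simp
  ring_nf
  rw [Complex.I_sq]
  ring

open Complex in
lemma my_scal1b (s a bb rw iw : ℂ) (h1 : s - (a + bb*I) ≠ 0) (h2 : s - (a - bb*I) ≠ 0) :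
    2 * (-bb / ((s-(a+bb*I))*(s-(a-bb*I))) * rw + (s - a) / ((s-(a+bb*I))*(s-(a-bb*I))) * (-iw))
    = I*(rw + iw*I)/(s-(a+bb*I)) - I*(rw - iw*I)/(s-(a-bb*I)) := by
  have h4 : (Complex.I:ℂ)^4 = 1 := by
    rw [(by ring : (Complex.I:ℂ)^4 = (Complex.I^2)^2), Complex.I_sq]; ring
  have h6 : (Complex.I:ℂ)^6 = -1 := by
    rw [(by ring : (Complex.I:ℂ)^6 = (Complex.I^2)^3), Complex.I_sq]; ring
  field_simp
  ring_nf
  simp only [h4, h6, Complex.I_sq]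
  ring

open Complex in
lemma my_scal2 (s a bb rw iw rh ih : ℂ) (h1 : s - (a + bb*I) ≠ 0) (h2 : s - (a - bb*I) ≠ 0) :
    2 * (rh * ((s - a) / ((s-(a+bb*I))*(s-(a-bb*I))) * rw
            + bb / ((s-(a+bb*I))*(s-(a-bb*I))) * (-iw))
       + ih * (-bb / ((s-(a+bb*I))*(s-(a-bb*I))) * rw
            + (s - a) / ((s-(a+bb*I))*(s-(a-bb*I))) * (-iw)))
    = (rh + ih*I)*(rw + iw*I)/(s-(a+bb*I)) + (rh - ih*I)*(rw - iw*I)/(s-(a-bb*I)) := by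
  have e1 := my_scal1 s a bb rw iw h1 h2
  have e2 := my_scal1b s a bb rw iw h1 h2
  linear_combination rh * e1 + ih * e2

open Complex in
lemma my_Dsq (s a bb : ℂ) : (s-(a+bb*I))*(s-(a-bb*I)) = (s-a)^2 + bb^2 := by
  ring_nf
  rw [Complex.I_sq]
  ring

lemma my_block_inv (s a bb D : ℂ) (hD : D ≠ 0) (hDe : D = (s-a)^2 + bb^2) :
    (Matrix.of fun x y : Fin 2 =>
        if x = 0 then (if y = 0 then s - a else -bb) else (if y = 0 then bb else s - a))
      * (Matrix.of fun x y : Fin 2 =>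
        if x = 0 then (if y = 0 then (s-a)/D else bb/D) else (if y = 0 then -bb/D else (s-a)/D))
    = 1 := by
  subst hDe
  ext x y
  fin_cases x <;> fin_cases y <;>
    simp [Matrix.mul_apply, Fin.sum_univ_two, Matrix.one_apply] <;>
    field_simp <;> ring

end AuxStmt15

/-- Real state-space realization of a conjugate-closed unstructured
barycentric form. The index `(j, a) : Fin m × Fin 2` encodes the `a`-th row/column
of the `j`-th 2×2 block. With the real block-diagonal matrix `Ã` (blocks
`[[Re λ_j, Im λ_j], [−Im λ_j, Re λ_j]]`), real vectors `c̃, b̃, z̃`, and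
`E = I`, `A = Ã − b̃ z̃ᵀ`, `b = √2 b̃`, `c = √2 c̃`, for every admissible `s` the
matrix `sE − A` is invertible and `cᵀ(sE − A)⁻¹b` equals the barycentric form with
conjugate-closed parameters `(λ_j, h_j, w_j)`, `(conj λ_j, conj h_j, conj w_j)`. -/
theorem stmt_15 (m : ℕ) (lam h w : Fin m → ℂ)
    (hlam : Function.Injective lam)
    (hdist : ∀ i j, lam i ≠ starRingEnd ℂ (lam j))
    (At : Matrix (Fin m × Fin 2) (Fin m × Fin 2) ℂ)
    (hAt : At = Matrix.of fun p q =>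
      if p.1 = q.1 then
        (if p.2 = 0 then
          (if q.2 = 0 then ((lam p.1).re : ℂ) else ((lam p.1).im : ℂ))
        else
          (if q.2 = 0 then (-(lam p.1).im : ℂ) else ((lam p.1).re : ℂ)))
      else 0)
    (ct bt zt : Fin m × Fin 2 → ℂ)
    (hct : ct = fun p => if p.2 = 0 then ((h p.1).re : ℂ) else ((h p.1).im : ℂ))
    (hbt : bt = fun p => if p.2 = 0 then ((w p.1).re : ℂ) else (-(w p.1).im : ℂ))
    (hzt : zt = fun p => if p.2 = 0 then (2 : ℂ) else 0)
    (A : Matrix (Fin m × Fin 2) (Fin m × Fin 2) ℂ)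
    (hA : A = At - Matrix.of (fun p q => bt p * zt q))
    (b c : Fin m × Fin 2 → ℂ)
    (hb : b = fun p => (Real.sqrt 2 : ℂ) * bt p)
    (hc : c = fun p => (Real.sqrt 2 : ℂ) * ct p)
    (s : ℂ) (hs1 : ∀ j, s ≠ lam j) (hs2 : ∀ j, s ≠ starRingEnd ℂ (lam j))
    (hd : 1 + ∑ j, (w j / (s - lam j)
          + starRingEnd ℂ (w j) / (s - starRingEnd ℂ (lam j))) ≠ 0) :
    IsUnit (s • (1 : Matrix (Fin m × Fin 2) (Fin m × Fin 2) ℂ) - A)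
    ∧ dotProduct c
        ((s • (1 : Matrix (Fin m × Fin 2) (Fin m × Fin 2) ℂ) - A)⁻¹.mulVec b)
      = (∑ j, (h j * w j / (s - lam j)
          + starRingEnd ℂ (h j) * starRingEnd ℂ (w j) / (s - starRingEnd ℂ (lam j))))
        / (1 + ∑ j, (w j / (s - lam j)
          + starRingEnd ℂ (w j) / (s - starRingEnd ℂ (lam j)))) := by
  classical
  have hs1' : ∀ j, s - lam j ≠ 0 := fun j => sub_ne_zero.mpr (hs1 j)
  have hs2' : ∀ j, s - starRingEnd ℂ (lam j) ≠ 0 := fun j => sub_ne_zero.mpr (hs2 j)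
  obtain ⟨al, hal⟩ : ∃ f : Fin m → ℂ, f = fun j => ((lam j).re : ℂ) := ⟨_, rfl⟩
  obtain ⟨be, hbe⟩ : ∃ f : Fin m → ℂ, f = fun j => ((lam j).im : ℂ) := ⟨_, rfl⟩
  have hlamd : ∀ j, lam j = al j + be j * Complex.I := by
    intro j; rw [hal, hbe]; exact (Complex.re_add_im (lam j)).symm
  have hconjd : ∀ j, starRingEnd ℂ (lam j) = al j - be j * Complex.I := by
    intro j; rw [hal, hbe]; apply Complex.ext <;> simp
  obtain ⟨D, hD⟩ : ∃ f : Fin m → ℂ,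
      f = fun j => (s - lam j) * (s - starRingEnd ℂ (lam j)) := ⟨_, rfl⟩
  have hD0 : ∀ j, D j ≠ 0 := by
    intro j; simp only [hD]; exact mul_ne_zero (hs1' j) (hs2' j)
  have hDe : ∀ j, D j = (s - al j)^2 + (be j)^2 := by
    intro j; simp only [hD]; rw [hconjd j, hlamd j]; exact my_Dsq s (al j) (be j)
  obtain ⟨F, hF⟩ : ∃ f : Fin m → Matrix (Fin 2) (Fin 2) ℂ,
      f = fun j => Matrix.of fun x y : Fin 2 =>
        if x = 0 then (if y = 0 then s - al j else -(be j))
        else (if y = 0 then be j else s - al j) := ⟨_, rfl⟩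
  obtain ⟨G, hG⟩ : ∃ f : Fin m → Matrix (Fin 2) (Fin 2) ℂ,
      f = fun j => Matrix.of fun x y : Fin 2 =>
        if x = 0 then (if y = 0 then (s - al j)/D j else be j/D j)
        else (if y = 0 then -(be j)/D j else (s - al j)/D j) := ⟨_, rfl⟩
  have hFG : ∀ j, F j * G j = 1 := by
    intro j; rw [hF, hG]; exact my_block_inv s (al j) (be j) (D j) (hD0 j) (hDe j)
  obtain ⟨M, hM⟩ : ∃ X : Matrix (Fin m × Fin 2) (Fin m × Fin 2) ℂ,
      X = Matrix.of fun p q => if p.1 = q.1 then F p.1 p.2 q.2 else 0 := ⟨_, rfl⟩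
  obtain ⟨Minv, hMinv⟩ : ∃ X : Matrix (Fin m × Fin 2) (Fin m × Fin 2) ℂ,
      X = Matrix.of fun p q => if p.1 = q.1 then G p.1 p.2 q.2 else 0 := ⟨_, rfl⟩
  have hMM : M * Minv = 1 := by
    rw [hM, hMinv, my_blockdiag_mul, ← my_blockdiag_one (m := m)]
    congr 1; ext p q
    by_cases hpq : p.1 = q.1 <;> simp [hpq, hFG]
  have hMeq : s • (1 : Matrix (Fin m × Fin 2) (Fin m × Fin 2) ℂ) - At = M := by
    rw [hAt, hM, hF]
    ext ⟨i, a⟩ ⟨j, b'⟩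
    simp only [Matrix.sub_apply, Matrix.smul_apply, Matrix.one_apply, Matrix.of_apply,
      smul_eq_mul, Prod.mk.injEq]
    by_cases hij : i = j
    · subst hij
      fin_cases a <;> fin_cases b' <;> simp [hal, hbe]
    · simp [hij]
  obtain ⟨ub, hub⟩ : ∃ v : Fin m × Fin 2 → ℂ, v = Minv.mulVec bt := ⟨_, rfl⟩
  have hubv : ∀ p : Fin m × Fin 2, ub p = ∑ cc : Fin 2, G p.1 p.2 cc * bt (p.1, cc) := by
    intro p; rw [hub, hMinv, my_blockdiag_mulVec]
  have hub0 : ∀ j, ub (j, 0)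
      = (s - al j)/D j * ((w j).re : ℂ) + be j/D j * (-((w j).im : ℂ)) := by
    intro j; rw [hubv, hG, hbt]
    simp [Fin.sum_univ_two]
  have hub1 : ∀ j, ub (j, 1)
      = -(be j)/D j * ((w j).re : ℂ) + (s - al j)/D j * (-((w j).im : ℂ)) := by
    intro j; rw [hubv, hG, hbt]
    simp [Fin.sum_univ_two]
  obtain ⟨d, hd'⟩ : ∃ x : ℂ, x = 1 + dotProduct zt ub := ⟨_, rfl⟩
  have hztub : dotProduct zt ub
      = ∑ j, (w j / (s - lam j)
          + starRingEnd ℂ (w j) / (s - starRingEnd ℂ (lam j))) := by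
    rw [dotProduct, Fintype.sum_prod_type]
    refine Finset.sum_congr rfl fun j _ => ?_
    rw [Fin.sum_univ_two, hzt]
    simp only
    rw [if_pos trivial, if_neg (by decide : ¬(1 : Fin 2) = 0)]
    rw [hub0 j]
    have h1 := hs1' j; have h2 := hs2' j
    rw [hlamd j] at h1; rw [hconjd j] at h2
    have key := my_scal1 s (al j) (be j) (((w j).re : ℂ)) (((w j).im : ℂ)) h1 h2
    rw [← hlamd j, ← hconjd j] at key
    have hcwj : starRingEnd ℂ (w j)
        = ((w j).re : ℂ) - ((w j).im : ℂ) * Complex.I := by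
      apply Complex.ext <;> simp
    rw [Complex.re_add_im, ← hcwj] at key
    simp only [hD]
    linear_combination key
  have hctub : 2 * dotProduct ct ub
      = ∑ j, (h j * w j / (s - lam j)
          + starRingEnd ℂ (h j) * starRingEnd ℂ (w j) / (s - starRingEnd ℂ (lam j))) := by
    rw [dotProduct, Fintype.sum_prod_type, Finset.mul_sum]
    refine Finset.sum_congr rfl fun j _ => ?_
    rw [Fin.sum_univ_two, hct]
    simp only
    rw [if_pos trivial, if_neg (by decide : ¬(1 : Fin 2) = 0)]
    rw [hub0 j, hub1 j]
    have h1 := hs1' j; have h2 := hs2' j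
    rw [hlamd j] at h1; rw [hconjd j] at h2
    have key := my_scal2 s (al j) (be j) (((w j).re : ℂ)) (((w j).im : ℂ))
      (((h j).re : ℂ)) (((h j).im : ℂ)) h1 h2
    rw [← hlamd j, ← hconjd j] at key
    have hcwj : starRingEnd ℂ (w j)
        = ((w j).re : ℂ) - ((w j).im : ℂ) * Complex.I := by
      apply Complex.ext <;> simp
    have hchj : starRingEnd ℂ (h j)
        = ((h j).re : ℂ) - ((h j).im : ℂ) * Complex.I := by
      apply Complex.ext <;> simp
    rw [Complex.re_add_im, Complex.re_add_im, ← hcwj, ← hchj] at key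
    simp only [hD]
    linear_combination key
  have hdne : d ≠ 0 := by rw [hd', hztub]; exact hd
  obtain ⟨P, hP⟩ : ∃ X : Matrix (Fin m × Fin 2) (Fin m × Fin 2) ℂ,
      X = Matrix.of (fun p q => bt p * zt q) := ⟨_, rfl⟩
  obtain ⟨vz, hvz⟩ : ∃ v : Fin m × Fin 2 → ℂ, v = Matrix.vecMul zt Minv := ⟨_, rfl⟩
  obtain ⟨Q, hQ⟩ : ∃ X : Matrix (Fin m × Fin 2) (Fin m × Fin 2) ℂ,
      X = Matrix.of (fun p q => ub p * vz q) := ⟨_, rfl⟩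
  obtain ⟨K, hK⟩ : ∃ X : Matrix (Fin m × Fin 2) (Fin m × Fin 2) ℂ,
      X = Minv - d⁻¹ • Q := ⟨_, rfl⟩
  have hS : s • (1 : Matrix (Fin m × Fin 2) (Fin m × Fin 2) ℂ) - A = M + P := by
    rw [hA, hP]
    have h0 : s • (1 : Matrix (Fin m × Fin 2) (Fin m × Fin 2) ℂ)
        - (At - Matrix.of (fun p q => bt p * zt q))
        = (s • (1 : Matrix (Fin m × Fin 2) (Fin m × Fin 2) ℂ) - At)
          + Matrix.of (fun p q => bt p * zt q) := by abel
    rw [h0, hMeq]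
  have hbtP : M.mulVec ub = bt := by
    rw [hub, Matrix.mulVec_mulVec, hMM, Matrix.one_mulVec]
  have hdsub : dotProduct zt ub = d - 1 := by rw [hd']; ring
  have hSK : (M + P) * K = 1 := by
    rw [hK, mul_sub, add_mul, add_mul, hMM]
    rw [Matrix.mul_smul, Matrix.mul_smul]
    rw [hP, hQ, my_outer_mul bt zt Minv, ← hvz]
    rw [my_mul_outer M ub vz, hbtP]
    rw [my_outer_mul_outer bt zt ub vz, hdsub]
    have hco : d⁻¹ • Matrix.of (fun p q => bt p * vz q)
        + d⁻¹ • ((d - 1) • Matrix.of (fun p q => bt p * vz q))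
        = Matrix.of (fun p q => bt p * vz q) := by
      rw [smul_smul, ← add_smul,
        (by field_simp; ring : d⁻¹ + d⁻¹ * (d - 1) = 1), one_smul]
    rw [hco]
    abel
  have hinv : (s • (1 : Matrix (Fin m × Fin 2) (Fin m × Fin 2) ℂ) - A)⁻¹ = K := by
    rw [hS]; exact Matrix.inv_eq_right_inv hSK
  have hunit : IsUnit (s • (1 : Matrix (Fin m × Fin 2) (Fin m × Fin 2) ℂ) - A) := by
    rw [hS]
    have := invertibleOfRightInverse _ _ hSK
    exact isUnit_of_invertible _
  refine ⟨hunit, ?_⟩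
  rw [hinv]
  have hb2 : b = (Real.sqrt 2 : ℂ) • bt := by rw [hb]; rfl
  have hc2 : c = (Real.sqrt 2 : ℂ) • ct := by rw [hc]; rfl
  have hvzbt : dotProduct vz bt = d - 1 := by
    rw [hvz, ← Matrix.dotProduct_mulVec, ← hub, hdsub]
  have hKb : K.mulVec bt = ub - (d⁻¹ * (d - 1)) • ub := by
    rw [hK, Matrix.sub_mulVec, Matrix.smul_mulVec, hQ, my_outer_mulVec, hvzbt, ← hub,
      smul_smul]
  have h2c : ((Real.sqrt 2 : ℝ) : ℂ) * ((Real.sqrt 2 : ℝ) : ℂ) = 2 := by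
    rw [← Complex.ofReal_mul, Real.mul_self_sqrt (by norm_num : (0:ℝ) ≤ 2)]
    norm_num
  have hden : (1 : ℂ) + ∑ j, (w j / (s - lam j)
      + starRingEnd ℂ (w j) / (s - starRingEnd ℂ (lam j))) = d := by
    rw [hd', hztub]
  rw [hb2, hc2, Matrix.mulVec_smul, hKb]
  rw [smul_dotProduct, dotProduct_smul, dotProduct_sub,
    dotProduct_smul]
  rw [hden, ← hctub]
  simp only [smul_eq_mul]
  rw [← mul_assoc, h2c]
  field_simp
  ring
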